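/- For $n\ge 0$, let $P_n := \{(i,j) : 0\le i\le j\le n,\ i+j\le n\}$ with the componentwise order, and let $T_n\subseteq P_n$ be the subposet of pairs $(i,j)$ with $i+j\in\{n-1, n\}$. Then the inclusion $T_n\subseteq P_n$ is final in the sense of Quillen's Theorem A: for every $(i,j)\in P_n$, the subposet $\{(k,l)\in T_n : i\le k,\ j\le l\}$ is nonempty and connected (any two elements are joined by a zigzag of comparable elements within the subposet). -/

import Mathlib

/-- Membership in the poset `P_n = {(i,j) : i ≤ j ≤ n, i + j ≤ n}`. -/
def inP (n : ℕ) (p : ℕ × ℕ) : Prop := p.1 ≤ p.2 ∧ p.2 ≤ n ∧ p.1 + p.2 ≤ n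

/-- Membership in the subposet `T_n ⊆ P_n` of pairs with `i + j ∈ {n-1, n}`. -/
def inT (n : ℕ) (p : ℕ × ℕ) : Prop := inP n p ∧ n - 1 ≤ p.1 + p.2

private lemma diag_chain (n : ℕ) (p : ℕ × ℕ) (k : ℕ) (hk : p.1 ≤ k) :
    ∀ k', k ≤ k' → k' + k' ≤ n → p.2 + k' ≤ n →
    Relation.ReflTransGen
        (fun a b : ℕ × ℕ => (inT n a ∧ p ≤ a) ∧ (inT n b ∧ p ≤ b) ∧ (a ≤ b ∨ b ≤ a))
        (k, n - k) (k', n - k') := by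
  intro k' hkk
  induction k', hkk using Nat.le_induction with
  | base => intro _ _; exact .refl
  | succ m hm ih =>
    intro h1 h2
    have chain := ih (by omega) (by omega)
    have step1 : (fun a b : ℕ × ℕ => (inT n a ∧ p ≤ a) ∧ (inT n b ∧ p ≤ b) ∧ (a ≤ b ∨ b ≤ a))
        (m, n - m) (m, n - m - 1) := by
      simp only [inT, inP, Prod.le_def, Prod.mk_le_mk]
      omega
    have step2 : (fun a b : ℕ × ℕ => (inT n a ∧ p ≤ a) ∧ (inT n b ∧ p ≤ b) ∧ (a ≤ b ∨ b ≤ a))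
        (m, n - m - 1) (m + 1, n - (m + 1)) := by
      simp only [inT, inP, Prod.le_def, Prod.mk_le_mk]
      omega
    exact (chain.tail step1).tail step2

private lemma to_diag (n : ℕ) (p q : ℕ × ℕ) (hq : inT n q) (hpq : p ≤ q) :
    Relation.ReflTransGen
        (fun a b : ℕ × ℕ => (inT n a ∧ p ≤ a) ∧ (inT n b ∧ p ≤ b) ∧ (a ≤ b ∨ b ≤ a))
        q (q.1, n - q.1) := by
  refine Relation.ReflTransGen.single ?_
  obtain ⟨⟨h1, h2, h3⟩, h4⟩ := hq
  obtain ⟨h5, h6⟩ := hpq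
  simp only [inT, inP, Prod.le_def, Prod.mk_le_mk]
  omega

/-- The inclusion `T_n ⊆ P_n` is final in the sense of Quillen's Theorem A:
for every `p ∈ P_n`, the coslice `{q ∈ T_n : p ≤ q}` is nonempty, and any two of
its elements are joined by a zigzag of comparable elements inside it. -/
theorem stmt13 (n : ℕ) (p : ℕ × ℕ) (hp : inP n p) :
    (∃ q : ℕ × ℕ, inT n q ∧ p ≤ q) ∧
    (∀ q r : ℕ × ℕ, inT n q → p ≤ q → inT n r → p ≤ r →
      Relation.ReflTransGen
        (fun a b : ℕ × ℕ => (inT n a ∧ p ≤ a) ∧ (inT n b ∧ p ≤ b) ∧ (a ≤ b ∨ b ≤ a)) q r) := by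
  obtain ⟨h1, h2, h3⟩ := hp
  constructor
  · refine ⟨(p.1, n - p.1), ?_, ?_⟩ <;>
      simp only [inT, inP, Prod.le_def, Prod.mk_le_mk] <;> omega
  · intro q r hq hpq hr hpr
    have hsymm : Symmetric
        (fun a b : ℕ × ℕ => (inT n a ∧ p ≤ a) ∧ (inT n b ∧ p ≤ b) ∧ (a ≤ b ∨ b ≤ a)) := by
      intro a b ⟨ha, hb, hab⟩; exact ⟨hb, ha, hab.symm⟩
    have hsym : Symmetric (Relation.ReflTransGen
        (fun a b : ℕ × ℕ => (inT n a ∧ p ≤ a) ∧ (inT n b ∧ p ≤ b) ∧ (a ≤ b ∨ b ≤ a))) :=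
      fun a b h => @Std.Symm.symm _ _ (@Relation.ReflTransGen.stdSymm _ _ ⟨hsymm⟩) a b h
    have cq := to_diag n p q hq hpq
    have cr := to_diag n p r hr hpr
    have hq1 : p.1 ≤ q.1 := hpq.1
    have hr1 : p.1 ≤ r.1 := hpr.1
    have hq2 : q.1 + q.1 ≤ n := by obtain ⟨⟨a, b, c⟩, d⟩ := hq; omega
    have hr2 : r.1 + r.1 ≤ n := by obtain ⟨⟨a, b, c⟩, d⟩ := hr; omega
    have hq3 : p.2 + q.1 ≤ n := by obtain ⟨⟨a, b, c⟩, d⟩ := hq; have := hpq.2; omega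
    have hr3 : p.2 + r.1 ≤ n := by obtain ⟨⟨a, b, c⟩, d⟩ := hr; have := hpr.2; omega
    rcases le_total q.1 r.1 with h | h
    · exact (cq.trans (diag_chain n p q.1 hq1 r.1 h hr2 hr3)).trans (hsym cr)
    · exact (cq.trans (hsym (diag_chain n p r.1 hr1 q.1 h hq2 hq3))).trans (hsym cr)
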